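/- arXiv:0802.0123 — 4 statements merged into one kernel-verified Lean document; each statement's English description precedes it below -/
import Mathlib

section
/- Let n be a natural number and let e_0, e_1, …, e_{2n+1} be real numbers satisfying Σ_{k=0}^{2n+1} (−1)^k e_k = 0. For 0 ≤ k ≤ 2n set N_k = Σ_{j=0}^{k} (−1)^{k−j} e_j, and define the weight w(k) = k if k ≤ n and w(k) = k+1 if k > n. Then Σ_{k=0}^{2n} c_k N_k = Σ_{k=0}^{2n+1} (−1)^k w(k) e_k, where c_k = (−1)^{k+1} for k ≠ n and c_n = 2·(−1)^{n+1}. -/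
private noncomputable def Naux (e : ℕ → ℝ) (k : ℕ) : ℝ :=
  ∑ j ∈ Finset.range (k + 1), (-1 : ℝ) ^ (k - j) * e j

private lemma Naux_zero (e : ℕ → ℝ) : Naux e 0 = e 0 := by
  simp [Naux]

private lemma Naux_succ (e : ℕ → ℝ) (k : ℕ) :
    Naux e (k + 1) = e (k + 1) - Naux e k := by
  rw [Naux, Finset.sum_range_succ]
  have : ∀ j ∈ Finset.range (k + 1),
      (-1 : ℝ) ^ (k + 1 - j) * e j = -((-1 : ℝ) ^ (k - j) * e j) := by
    intro j hj
    have hj' : j ≤ k := Nat.lt_succ_iff.mp (Finset.mem_range.mp hj)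
    have : k + 1 - j = (k - j) + 1 := by omega
    rw [this, pow_succ]
    ring
  rw [Finset.sum_congr rfl this, Finset.sum_neg_distrib]
  simp [Naux]
  ring

private lemma abel (e a : ℕ → ℝ) : ∀ M : ℕ,
    ∑ k ∈ Finset.range (M + 1), a k * e k =
      (∑ k ∈ Finset.range M, (a k + a (k + 1)) * Naux e k) + a M * Naux e M := by
  intro M
  induction M with
  | zero => simp [Naux_zero]
  | succ M ih =>
      rw [Finset.sum_range_succ, ih, Finset.sum_range_succ, Naux_succ]
      ring

/-- the finite combinatorial identity underlying the computation of the
Reidemeister–Franz torsion of the spectral cut-off subcomplexes of the contact complex.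
Here `e k` plays the role of `e_k`, `N_k = ∑_{j=0}^k (-1)^{k-j} e_j`, the weight is
`w k = k` for `k ≤ n` and `k+1` for `k > n`, and `c k = (-1)^{k+1}` for `k ≠ n`,
`c n = 2 (-1)^{n+1}`. -/
theorem stmt0 (n : ℕ) (e : ℕ → ℝ)
    (h : ∑ k ∈ Finset.range (2 * n + 2), (-1 : ℝ) ^ k * e k = 0) :
    ∑ k ∈ Finset.range (2 * n + 1),
        (if k = n then 2 * (-1 : ℝ) ^ (n + 1) else (-1 : ℝ) ^ (k + 1)) *
          (∑ j ∈ Finset.range (k + 1), (-1 : ℝ) ^ (k - j) * e j) =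
      ∑ k ∈ Finset.range (2 * n + 2),
        (-1 : ℝ) ^ k * (if k ≤ n then (k : ℝ) else (k : ℝ) + 1) * e k := by
  set a : ℕ → ℝ := fun k => (-1 : ℝ) ^ k * (if k ≤ n then (k : ℝ) else (k : ℝ) + 1)
    with ha
  have key := abel e a (2 * n + 1)
  -- N (2n+1) = 0
  have hN : Naux e (2 * n + 1) = 0 := by
    have : Naux e (2 * n + 1) = -∑ k ∈ Finset.range (2 * n + 2), (-1 : ℝ) ^ k * e k := by
      rw [Naux, ← Finset.sum_neg_distrib]
      apply Finset.sum_congr rfl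
      intro j hj
      have hj' : j ≤ 2 * n + 1 := Nat.lt_succ_iff.mp (Finset.mem_range.mp hj)
      have h1 : (2 * n + 1 - j) + j = 2 * n + 1 := by omega
      have h2 : ((-1 : ℝ)) ^ (2 * n + 1 - j) * (-1 : ℝ) ^ j = -1 := by
        rw [← pow_add, h1, pow_succ, pow_mul]
        simp
      have h3 : ((-1 : ℝ)) ^ j * (-1 : ℝ) ^ j = 1 := by
        rw [← pow_add, ← two_mul, pow_mul]
        simp
      have : ((-1 : ℝ)) ^ (2 * n + 1 - j) = -(-1 : ℝ) ^ j := by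
        have := congrArg (· * (-1 : ℝ) ^ j) h2
        calc ((-1 : ℝ)) ^ (2 * n + 1 - j)
            = ((-1 : ℝ)) ^ (2 * n + 1 - j) * ((-1 : ℝ) ^ j * (-1 : ℝ) ^ j) := by rw [h3]; ring
          _ = (((-1 : ℝ)) ^ (2 * n + 1 - j) * (-1 : ℝ) ^ j) * (-1 : ℝ) ^ j := by ring
          _ = -(-1 : ℝ) ^ j := by rw [h2]; ring
      rw [this]; ring
    rw [this, h, neg_zero]
  -- coefficient identity
  have hc : ∀ k ∈ Finset.range (2 * n + 1),
      (if k = n then 2 * (-1 : ℝ) ^ (n + 1) else (-1 : ℝ) ^ (k + 1)) = a k + a (k + 1) := by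
    intro k _
    rcases lt_trichotomy k n with hk | hk | hk
    · have h1 : k ≤ n := hk.le
      have h2 : k + 1 ≤ n := hk
      have h3 : k ≠ n := hk.ne
      simp only [ha, if_neg h3, if_pos h1, if_pos h2]
      push_cast
      rw [pow_succ]
      ring
    · subst hk
      have h2 : ¬ (k + 1 ≤ k) := by omega
      simp only [ha, if_pos rfl, if_pos le_rfl, if_neg h2]
      push_cast
      rw [pow_succ]
      ring
    · have h1 : ¬ (k ≤ n) := by omega
      have h2 : ¬ (k + 1 ≤ n) := by omega
      have h3 : k ≠ n := by omega
      simp only [ha, if_neg h3, if_neg h1, if_neg h2]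
      push_cast
      rw [pow_succ]
      ring
  calc ∑ k ∈ Finset.range (2 * n + 1),
        (if k = n then 2 * (-1 : ℝ) ^ (n + 1) else (-1 : ℝ) ^ (k + 1)) *
          (∑ j ∈ Finset.range (k + 1), (-1 : ℝ) ^ (k - j) * e j)
      = ∑ k ∈ Finset.range (2 * n + 1), (a k + a (k + 1)) * Naux e k := by
        apply Finset.sum_congr rfl
        intro k hk
        rw [hc k hk]; rfl
    _ = ∑ k ∈ Finset.range (2 * n + 2), a k * e k := by
        rw [key, hN]; ring
    _ = _ := by
        apply Finset.sum_congr rfl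
        intro k _
        simp [ha, mul_assoc]
end

section
/- Let m ≥ 1 be a natural number and set K = ⌊m/2⌋. Let (a_j)_{j∈ℕ} be a sequence of nonnegative reals such that Σ_j e^{−t·a_j} converges for every t > 0, and suppose there are real numbers c_0, …, c_K such that the remainder B(t) := Σ_j e^{−t·a_j} − Σ_{k=0}^{K} c_k · t^{k−m/2} is bounded on (0,∞) and B(t) → 0 as t → 0⁺. Then for every t > 0 the sum Σ_j e^{−t·√(a_j)} converges, and as t → 0⁺ one has Σ_j e^{−t·√(a_j)} − Σ_{k=0}^{K} (2^{m−2k}/√π) · Γ((m−2k+1)/2) · c_k · t^{2k−m} → 0. -/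
open Filter Topology MeasureTheory Real Set



lemma ker_cont (b : ℝ) :
    ContinuousOn (fun u : ℝ => Real.exp (-u) / Real.sqrt u * Real.exp (-(b^2) / (4*u)))
      (Set.Ioi 0) := by
  apply ContinuousOn.mul
  · exact (continuousOn_id.neg.rexp).div (continuous_sqrt.continuousOn) (fun x hx => by
      have : (0:ℝ) < x := hx; positivity)
  · exact ContinuousOn.rexp ((continuousOn_const).div (by fun_prop) (fun x hx => by
      have : (0:ℝ) < x := hx; positivity))

lemma sqrt_inv_rpow {u : ℝ} (hu : 0 < u) : (Real.sqrt u)⁻¹ = u ^ ((1:ℝ)/2 - 1) := by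
  rw [Real.sqrt_eq_rpow, ← Real.rpow_neg hu.le]; norm_num

-- integrability of kernel
lemma ker_int (b : ℝ) :
    IntegrableOn (fun u : ℝ => Real.exp (-u) / Real.sqrt u * Real.exp (-(b^2) / (4*u)))
      (Set.Ioi 0) := by
  have hg : IntegrableOn (fun u : ℝ => Real.exp (-u) * u ^ ((1:ℝ)/2 - 1)) (Set.Ioi 0) :=
    Real.GammaIntegral_convergent (by norm_num)
  refine hg.integrable.mono' ((ker_cont b).aestronglyMeasurable measurableSet_Ioi) ?_
  filter_upwards [ae_restrict_mem measurableSet_Ioi] with u hu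
  have hu' : (0:ℝ) < u := hu
  rw [Real.norm_eq_abs, abs_of_nonneg (by positivity)]
  have h1 : Real.exp (-(b^2) / (4*u)) ≤ 1 := by
    apply Real.exp_le_one_iff.mpr; rw [neg_div]
    simp [div_nonneg (sq_nonneg b) (by linarith : (0:ℝ) ≤ 4*u)]
  calc Real.exp (-u) / Real.sqrt u * Real.exp (-(b^2) / (4*u))
      ≤ Real.exp (-u) / Real.sqrt u * 1 := by
        apply mul_le_mul_of_nonneg_left h1 (by positivity)
    _ = Real.exp (-u) * u ^ ((1:ℝ)/2 - 1) := by
        rw [mul_one, div_eq_mul_inv, sqrt_inv_rpow hu']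

lemma img_sub (c : ℝ) (hc : 0 < c) : (fun v : ℝ => v - c/v) '' Set.Ioi 0 = Set.univ := by
  apply Set.eq_univ_of_forall
  intro w
  set S := Real.sqrt (w^2 + 4*c) with hS
  have hS2 : S^2 = w^2 + 4*c := Real.sq_sqrt (by positivity)
  have hSw : -w < S := by
    nlinarith [Real.sqrt_nonneg (w^2+4*c), abs_nonneg w, sq_abs w, neg_le_abs w, le_abs_self w]
  have hv : (0:ℝ) < (w + S)/2 := by linarith
  have hws : w + S ≠ 0 := by linarith
  refine ⟨(w + S)/2, by simpa using hv, ?_⟩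
  field_simp
  nlinarith [hS2]

lemma img_inv (c : ℝ) (hc : 0 < c) : (fun v : ℝ => c/v) '' Set.Ioi 0 = Set.Ioi 0 := by
  ext u
  constructor
  · rintro ⟨v, hv, rfl⟩; exact div_pos hc hv
  · intro hu; exact ⟨c/u, div_pos hc hu, by field_simp⟩

lemma img_sq : (fun v : ℝ => v^2) '' Set.Ioi 0 = Set.Ioi 0 := by
  ext u
  constructor
  · rintro ⟨v, hv, rfl⟩; exact pow_pos (show (0:ℝ) < v from hv) 2
  · intro hu; exact ⟨Real.sqrt u, Real.sqrt_pos.mpr hu, Real.sq_sqrt hu.le⟩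

lemma glasser (c : ℝ) (hc : 0 < c) :
    IntegrableOn (fun v : ℝ => Real.exp (-(v - c/v)^2)) (Set.Ioi 0) ∧
    ∫ v in Set.Ioi 0, Real.exp (-(v - c/v)^2) = Real.sqrt Real.pi / 2 := by
  have hderiv : ∀ v ∈ Set.Ioi (0:ℝ), HasDerivWithinAt (fun v : ℝ => v - c/v)
      (1 + c/v^2) (Set.Ioi 0) v := by
    intro v hv
    have hv' : (0:ℝ) < v := hv
    have h2 : HasDerivAt (fun y : ℝ => c * y⁻¹) (c * (-(v^2)⁻¹)) v :=
      (hasDerivAt_inv hv'.ne').const_mul c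
    have : HasDerivAt (fun v : ℝ => v - c/v) (1 - c * (-(v^2)⁻¹)) v := by
      simp only [div_eq_mul_inv]
      exact (hasDerivAt_id' v).sub h2
    exact this.hasDerivWithinAt.congr_deriv (by ring)
  have hinj : Set.InjOn (fun v : ℝ => v - c/v) (Set.Ioi 0) := by
    have : StrictMonoOn (fun v : ℝ => v - c/v) (Set.Ioi 0) := by
      intro x hx y hy hxy
      have hx' : (0:ℝ) < x := hx
      have hy' : (0:ℝ) < y := hy
      have : c/y < c/x := div_lt_div_of_pos_left hc hx' hxy
      simp only; linarith
    exact this.injOn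
  have hgauss : Integrable (fun w : ℝ => Real.exp (-w^2)) := by
    have := integrable_exp_neg_mul_sq (one_pos (α := ℝ))
    simpa [neg_mul, one_mul] using this
  have key : ∫ w : ℝ, Real.exp (-w^2)
      = ∫ v in Set.Ioi 0, |1 + c/v^2| • Real.exp (-(v - c/v)^2) := by
    rw [← MeasureTheory.setIntegral_univ, ← img_sub c hc]
    exact MeasureTheory.integral_image_eq_integral_abs_deriv_smul measurableSet_Ioi hderiv hinj _
  have hInt : IntegrableOn (fun v : ℝ => |1 + c/v^2| • Real.exp (-(v - c/v)^2)) (Set.Ioi 0) := by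
    refine (MeasureTheory.integrableOn_image_iff_integrableOn_abs_deriv_smul measurableSet_Ioi
      hderiv hinj (fun w => Real.exp (-w^2))).mp ?_
    rw [img_sub c hc, integrableOn_univ]
    exact hgauss
  -- continuity of the two pieces
  have hcont1 : ContinuousOn (fun v : ℝ => Real.exp (-(v - c/v)^2)) (Set.Ioi 0) := by
    apply ContinuousOn.rexp
    apply ContinuousOn.neg
    apply ContinuousOn.pow
    exact continuousOn_id.sub ((continuousOn_const).div continuousOn_id
      (fun x hx => ne_of_gt hx))
  have hcont2 : ContinuousOn (fun v : ℝ => c/v^2 * Real.exp (-(v - c/v)^2)) (Set.Ioi 0) := by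
    refine ContinuousOn.mul ((continuousOn_const).div (by fun_prop)
      (fun x hx => by have : (0:ℝ) < x := hx; positivity)) hcont1
  have habs : ∀ v ∈ Set.Ioi (0:ℝ), |1 + c/v^2| • Real.exp (-(v - c/v)^2)
      = Real.exp (-(v - c/v)^2) + c/v^2 * Real.exp (-(v - c/v)^2) := by
    intro v hv
    have hv' : (0:ℝ) < v := hv
    rw [abs_of_pos (by positivity), smul_eq_mul]
    ring
  have hI1 : IntegrableOn (fun v : ℝ => Real.exp (-(v - c/v)^2)) (Set.Ioi 0) := by
    refine hInt.integrable.mono' (hcont1.aestronglyMeasurable measurableSet_Ioi) ?_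
    filter_upwards [ae_restrict_mem measurableSet_Ioi] with v hv
    have hv' : (0:ℝ) < v := hv
    rw [Real.norm_eq_abs, abs_of_pos (Real.exp_pos _), habs v hv]
    have : 0 ≤ c/v^2 * Real.exp (-(v - c/v)^2) := by positivity
    linarith
  have hI2 : IntegrableOn (fun v : ℝ => c/v^2 * Real.exp (-(v - c/v)^2)) (Set.Ioi 0) := by
    refine hInt.integrable.mono' (hcont2.aestronglyMeasurable measurableSet_Ioi) ?_
    filter_upwards [ae_restrict_mem measurableSet_Ioi] with v hv
    have hv' : (0:ℝ) < v := hv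
    rw [Real.norm_eq_abs, abs_of_pos (by positivity), habs v hv]
    have : 0 ≤ Real.exp (-(v - c/v)^2) := (Real.exp_pos _).le
    linarith
  -- substitution v ↦ c/v shows the two pieces have equal integral
  have hsub2 : ∫ v in Set.Ioi 0, Real.exp (-(v - c/v)^2)
      = ∫ v in Set.Ioi 0, c/v^2 * Real.exp (-(v - c/v)^2) := by
    have hderiv2 : ∀ v ∈ Set.Ioi (0:ℝ), HasDerivWithinAt (fun v : ℝ => c/v)
        (-(c/v^2)) (Set.Ioi 0) v := by
      intro v hv
      have hv' : (0:ℝ) < v := hv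
      have h2 : HasDerivAt (fun y : ℝ => c * y⁻¹) (c * (-(v^2)⁻¹)) v :=
        (hasDerivAt_inv hv'.ne').const_mul c
      have : HasDerivAt (fun v : ℝ => c/v) (c * (-(v^2)⁻¹)) v := by
        simpa [div_eq_mul_inv] using h2
      exact this.hasDerivWithinAt.congr_deriv (by ring)
    have hinj2 : Set.InjOn (fun v : ℝ => c/v) (Set.Ioi 0) := by
      intro x hx y hy hxy
      have hx' : (0:ℝ) < x := hx
      have hy' : (0:ℝ) < y := hy
      field_simp at hxy
      linarith
    have := MeasureTheory.integral_image_eq_integral_abs_deriv_smul measurableSet_Ioi hderiv2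
      hinj2 (fun v => Real.exp (-(v - c/v)^2))
    rw [img_inv c hc] at this
    rw [this]
    apply MeasureTheory.setIntegral_congr_fun measurableSet_Ioi
    intro v hv
    have hv' : (0:ℝ) < v := hv
    have hcv : c/(c/v) = v := by field_simp
    simp only [smul_eq_mul, abs_neg, abs_of_pos (by positivity : (0:ℝ) < c/v^2), hcv]
    congr 2
    ring
  have hsum : ∫ v in Set.Ioi 0, |1 + c/v^2| • Real.exp (-(v - c/v)^2)
      = 2 * ∫ v in Set.Ioi 0, Real.exp (-(v - c/v)^2) := by
    rw [MeasureTheory.setIntegral_congr_fun measurableSet_Ioi habs,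
      MeasureTheory.integral_add hI1 hI2, ← hsub2]
    ring
  have hgaussval : ∫ w : ℝ, Real.exp (-w^2) = Real.sqrt Real.pi := by
    have := integral_gaussian 1
    simpa [neg_mul, one_mul] using this
  refine ⟨hI1, ?_⟩
  have : Real.sqrt Real.pi = 2 * ∫ v in Set.Ioi 0, Real.exp (-(v - c/v)^2) := by
    rw [← hgaussval, key, hsum]
  linarith
lemma kernel_eq (b : ℝ) (hb : 0 ≤ b) :
    ∫ u in Set.Ioi 0, Real.exp (-u) / Real.sqrt u * Real.exp (-(b^2) / (4*u))
      = Real.sqrt Real.pi * Real.exp (-b) := by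
  rcases eq_or_lt_of_le hb with rfl | hb'
  · -- b = 0
    have : ∀ u ∈ Set.Ioi (0:ℝ), Real.exp (-u) / Real.sqrt u * Real.exp (-((0:ℝ)^2) / (4*u))
        = Real.exp (-u) * u ^ ((1:ℝ)/2 - 1) := by
      intro u hu
      have hu' : (0:ℝ) < u := hu
      rw [div_eq_mul_inv, sqrt_inv_rpow hu']
      norm_num
    rw [MeasureTheory.setIntegral_congr_fun measurableSet_Ioi this,
      ← Real.Gamma_eq_integral (by norm_num : (0:ℝ) < 1/2), Real.Gamma_one_half_eq]
    simp
  · -- b > 0 : substitute u = v²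
    set c := b/2 with hc
    have hc' : 0 < c := by positivity
    have hderiv : ∀ v ∈ Set.Ioi (0:ℝ), HasDerivWithinAt (fun v : ℝ => v^2)
        (2*v) (Set.Ioi 0) v := by
      intro v hv
      simpa [mul_comm] using ((hasDerivAt_pow 2 v).hasDerivWithinAt (s := Set.Ioi 0))
    have hinj : Set.InjOn (fun v : ℝ => v^2) (Set.Ioi 0) := by
      intro x hx y hy hxy
      have hx' : (0:ℝ) < x := hx
      have hy' : (0:ℝ) < y := hy
      simp only at hxy
      rw [← Real.sqrt_sq hx'.le, ← Real.sqrt_sq hy'.le, hxy]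
    have := MeasureTheory.integral_image_eq_integral_abs_deriv_smul measurableSet_Ioi hderiv
      hinj (fun u => Real.exp (-u) / Real.sqrt u * Real.exp (-(b^2) / (4*u)))
    rw [img_sq] at this
    rw [this]
    have heq : ∀ v ∈ Set.Ioi (0:ℝ),
        |2*v| • (Real.exp (-(v^2)) / Real.sqrt (v^2) * Real.exp (-(b^2) / (4*(v^2))))
        = (2 * Real.exp (-b)) * Real.exp (-(v - c/v)^2) := by
      intro v hv
      have hv' : (0:ℝ) < v := hv
      rw [Real.sqrt_sq hv'.le, smul_eq_mul, abs_of_pos (by positivity : (0:ℝ) < 2*v)]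
      have e1 : 2*v * (Real.exp (-(v^2)) / v * Real.exp (-(b^2)/(4*v^2)))
          = 2 * Real.exp (-(v^2) + -(b^2)/(4*v^2)) := by
        rw [Real.exp_add]; field_simp
      have e2 : -(v^2) + -(b^2)/(4*v^2) = -b + -(v - c/v)^2 := by
        rw [hc]; field_simp; ring
      rw [e1, e2, Real.exp_add]; ring
    rw [MeasureTheory.setIntegral_congr_fun measurableSet_Ioi heq,
      MeasureTheory.integral_const_mul, (glasser c hc').2]
    ring

lemma gamma_term (t α : ℝ) (ht : 0 < t) (hα : α < 1/2) :
    IntegrableOn (fun u : ℝ => Real.exp (-u) / Real.sqrt u * (t^2/(4*u)) ^ α) (Set.Ioi 0) ∧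
    ∫ u in Set.Ioi 0, Real.exp (-u) / Real.sqrt u * (t^2/(4*u)) ^ α
      = (2:ℝ) ^ (-2*α) * t ^ (2*α) * Real.Gamma (1/2 - α) := by
  have hpt : ∀ u ∈ Set.Ioi (0:ℝ), Real.exp (-u) / Real.sqrt u * (t^2/(4*u)) ^ α
      = (t^2/4) ^ α * (Real.exp (-u) * u ^ ((1/2 - α) - 1)) := by
    intro u hu
    have hu' : (0:ℝ) < u := hu
    have h1 : (t^2/(4*u)) ^ α = (t^2/4) ^ α * u ^ (-α) := by
      rw [show t^2/(4*u) = (t^2/4) * u⁻¹ by field_simp,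
        Real.mul_rpow (by positivity) (by positivity), ← Real.rpow_neg_one,
        ← Real.rpow_mul hu'.le]
      norm_num
    rw [h1, div_eq_mul_inv, sqrt_inv_rpow hu']
    rw [show ((1:ℝ)/2 - α) - 1 = (1/2 - 1) + -α by ring, Real.rpow_add hu']
    ring
  have hint : IntegrableOn (fun u : ℝ => Real.exp (-u) * u ^ ((1/2 - α) - 1)) (Set.Ioi 0) :=
    Real.GammaIntegral_convergent (by linarith)
  have hconst : (t^2/4 : ℝ) ^ α = (2:ℝ) ^ (-2*α) * t ^ (2*α) := by
    rw [div_eq_mul_inv, Real.mul_rpow (by positivity) (by positivity),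
      ← Real.rpow_natCast t 2, ← Real.rpow_mul ht.le,
      show (4:ℝ)⁻¹ = (2:ℝ)^(-2:ℝ) by
        rw [Real.rpow_neg (by norm_num)]; norm_num,
      ← Real.rpow_mul (by norm_num : (0:ℝ) ≤ 2)]
    ring_nf
  constructor
  · exact (IntegrableOn.congr_fun (hint.const_mul _) (fun u hu => (hpt u hu).symm)
      measurableSet_Ioi)
  · rw [MeasureTheory.setIntegral_congr_fun measurableSet_Ioi hpt,
      MeasureTheory.integral_const_mul, ← Real.Gamma_eq_integral (by linarith : (0:ℝ) < 1/2 - α),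
      hconst]

lemma stepA (t : ℝ) (ht : 0 < t) (a : ℕ → ℝ) (ha : ∀ j, 0 ≤ a j)
    (hsum : ∀ s : ℝ, 0 < s → Summable fun j => Real.exp (-s * a j))
    (hfin : ∫⁻ u in Set.Ioi 0,
        ∑' j, ENNReal.ofReal (Real.exp (-u) / Real.sqrt u * Real.exp (-(t^2/(4*u)) * a j)) ≠ ⊤) :
    (Summable fun j => Real.exp (-t * Real.sqrt (a j))) ∧
    IntegrableOn (fun u => Real.exp (-u) / Real.sqrt u *
        ∑' j, Real.exp (-(t^2/(4*u)) * a j)) (Set.Ioi 0) ∧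
    Real.sqrt Real.pi * ∑' j, Real.exp (-t * Real.sqrt (a j))
      = ∫ u in Set.Ioi 0, Real.exp (-u) / Real.sqrt u * ∑' j, Real.exp (-(t^2/(4*u)) * a j) := by
  -- auxiliary facts about each summand
  have hb : ∀ j, 0 ≤ t * Real.sqrt (a j) := fun j => by positivity
  have hexp : ∀ j, ∀ u ∈ Set.Ioi (0:ℝ),
      Real.exp (-u) / Real.sqrt u * Real.exp (-(t^2/(4*u)) * a j)
      = Real.exp (-u) / Real.sqrt u * Real.exp (-((t * Real.sqrt (a j))^2) / (4*u)) := by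
    intro j u hu
    have hu' : (0:ℝ) < u := hu
    congr 2
    rw [mul_pow, Real.sq_sqrt (ha j)]
    field_simp
  have hker_int : ∀ j, IntegrableOn (fun u : ℝ => Real.exp (-u) / Real.sqrt u *
      Real.exp (-(t^2/(4*u)) * a j)) (Set.Ioi 0) := by
    intro j
    exact IntegrableOn.congr_fun (ker_int (t * Real.sqrt (a j)))
      (fun u hu => (hexp j u hu).symm) measurableSet_Ioi
  have hker_val : ∀ j, ∫ u in Set.Ioi 0, Real.exp (-u) / Real.sqrt u *
      Real.exp (-(t^2/(4*u)) * a j)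
      = Real.sqrt Real.pi * Real.exp (-(t * Real.sqrt (a j))) := by
    intro j
    rw [MeasureTheory.setIntegral_congr_fun measurableSet_Ioi (hexp j),
      kernel_eq _ (hb j)]
  have hnn : ∀ j, ∀ u ∈ Set.Ioi (0:ℝ),
      0 ≤ Real.exp (-u) / Real.sqrt u * Real.exp (-(t^2/(4*u)) * a j) := by
    intro j u hu
    have hu' : (0:ℝ) < u := hu
    positivity
  have hmeas : ∀ j, AEMeasurable (fun u : ℝ =>
      ENNReal.ofReal (Real.exp (-u) / Real.sqrt u * Real.exp (-(t^2/(4*u)) * a j)))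
      (volume.restrict (Set.Ioi 0)) := by
    intro j
    apply ENNReal.measurable_ofReal.comp_aemeasurable
    exact ((hker_int j).1.aemeasurable)
  -- lintegral of each summand
  have hlint : ∀ j, ∫⁻ u in Set.Ioi 0,
      ENNReal.ofReal (Real.exp (-u) / Real.sqrt u * Real.exp (-(t^2/(4*u)) * a j))
      = ENNReal.ofReal (Real.sqrt Real.pi * Real.exp (-(t * Real.sqrt (a j)))) := by
    intro j
    rw [← MeasureTheory.ofReal_integral_eq_lintegral_ofReal (hker_int j)
      ((ae_restrict_iff' measurableSet_Ioi).2 (Filter.Eventually.of_forall (hnn j))),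
      hker_val j]
  -- Tonelli
  have htonelli : ∑' j, ENNReal.ofReal (Real.sqrt Real.pi * Real.exp (-(t * Real.sqrt (a j))))
      = ∫⁻ u in Set.Ioi 0,
        ∑' j, ENNReal.ofReal (Real.exp (-u) / Real.sqrt u * Real.exp (-(t^2/(4*u)) * a j)) := by
    rw [MeasureTheory.lintegral_tsum hmeas]
    exact tsum_congr fun j => (hlint j).symm
  have hTfin : ∑' j, ENNReal.ofReal (Real.sqrt Real.pi * Real.exp (-(t * Real.sqrt (a j)))) ≠ ⊤ := by
    rw [htonelli]; exact hfin
  -- summability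
  have hsummable : Summable fun j => Real.exp (-t * Real.sqrt (a j)) := by
    have h1 := ENNReal.summable_toReal hTfin
    have h2 : (fun j => (ENNReal.ofReal (Real.sqrt Real.pi *
        Real.exp (-(t * Real.sqrt (a j))))).toReal)
        = fun j => Real.sqrt Real.pi * Real.exp (-(t * Real.sqrt (a j))) := by
      funext j
      rw [ENNReal.toReal_ofReal (by positivity)]
    rw [h2] at h1
    have h3 : Summable fun j => Real.exp (-(t * Real.sqrt (a j))) :=
      (summable_mul_left_iff (by positivity : Real.sqrt Real.pi ≠ 0)).mp h1
    simpa [neg_mul] using h3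
  refine ⟨hsummable, ?_⟩
  -- pointwise identity for the ENNReal sum
  have hptwise : ∀ u ∈ Set.Ioi (0:ℝ),
      ∑' j, ENNReal.ofReal (Real.exp (-u) / Real.sqrt u * Real.exp (-(t^2/(4*u)) * a j))
      = ENNReal.ofReal (Real.exp (-u) / Real.sqrt u * ∑' j, Real.exp (-(t^2/(4*u)) * a j)) := by
    intro u hu
    have hu' : (0:ℝ) < u := hu
    have hs : (0:ℝ) < t^2/(4*u) := by positivity
    have hsummand : Summable fun j => Real.exp (-(t^2/(4*u)) * a j) := hsum _ hs
    have hg : (0:ℝ) ≤ Real.exp (-u) / Real.sqrt u := by positivity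
    calc ∑' j, ENNReal.ofReal (Real.exp (-u) / Real.sqrt u * Real.exp (-(t^2/(4*u)) * a j))
        = ∑' j, ENNReal.ofReal (Real.exp (-u) / Real.sqrt u) *
            ENNReal.ofReal (Real.exp (-(t^2/(4*u)) * a j)) := by
          exact tsum_congr fun j => ENNReal.ofReal_mul hg
      _ = ENNReal.ofReal (Real.exp (-u) / Real.sqrt u) *
            ∑' j, ENNReal.ofReal (Real.exp (-(t^2/(4*u)) * a j)) := ENNReal.tsum_mul_left
      _ = ENNReal.ofReal (Real.exp (-u) / Real.sqrt u) *
            ENNReal.ofReal (∑' j, Real.exp (-(t^2/(4*u)) * a j)) := by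
          rw [ENNReal.ofReal_tsum_of_nonneg (fun j => (Real.exp_pos _).le) hsummand]
      _ = ENNReal.ofReal (Real.exp (-u) / Real.sqrt u * ∑' j, Real.exp (-(t^2/(4*u)) * a j)) := by
          rw [← ENNReal.ofReal_mul hg]
  -- measurability of the real integrand
  have hΦmeas : Measurable (fun u : ℝ => ∑' j, ENNReal.ofReal (Real.exp (-u) / Real.sqrt u *
      Real.exp (-(t^2/(4*u)) * a j))) := by
    apply Measurable.ennreal_tsum
    intro j
    apply ENNReal.measurable_ofReal.comp
    apply Measurable.mul
    · exact (measurable_id.neg.exp).div (continuous_sqrt.measurable)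
    · apply Measurable.exp
      apply Measurable.mul _ measurable_const
      apply Measurable.neg
      exact (measurable_const.div ((measurable_const.mul measurable_id)))
  have haemeas : AEStronglyMeasurable (fun u : ℝ => Real.exp (-u) / Real.sqrt u *
      ∑' j, Real.exp (-(t^2/(4*u)) * a j)) (volume.restrict (Set.Ioi 0)) := by
    apply AEStronglyMeasurable.congr (hΦmeas.ennreal_toReal).aestronglyMeasurable
    filter_upwards [ae_restrict_mem measurableSet_Ioi] with u hu
    rw [hptwise u hu, ENNReal.toReal_ofReal]
    have hu' : (0:ℝ) < u := hu
    have := hsum _ (by positivity : (0:ℝ) < t^2/(4*u))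
    have h0 : 0 ≤ ∑' j, Real.exp (-(t^2/(4*u)) * a j) :=
      tsum_nonneg fun j => (Real.exp_pos _).le
    positivity
  -- transfer lintegral to integral
  have hcongr_ae : (fun u : ℝ => ∑' j, ENNReal.ofReal (Real.exp (-u) / Real.sqrt u *
        Real.exp (-(t^2/(4*u)) * a j)))
      =ᵐ[volume.restrict (Set.Ioi 0)]
      (fun u : ℝ => ENNReal.ofReal (Real.exp (-u) / Real.sqrt u *
        ∑' j, Real.exp (-(t^2/(4*u)) * a j))) := by
    filter_upwards [ae_restrict_mem measurableSet_Ioi] with u hu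
    exact hptwise u hu
  have hnn' : 0 ≤ᵐ[volume.restrict (Set.Ioi 0)] fun u : ℝ =>
      Real.exp (-u) / Real.sqrt u * ∑' j, Real.exp (-(t^2/(4*u)) * a j) := by
    filter_upwards [ae_restrict_mem measurableSet_Ioi] with u hu
    have hu' : (0:ℝ) < u := hu
    have h0 : 0 ≤ ∑' j, Real.exp (-(t^2/(4*u)) * a j) :=
      tsum_nonneg fun j => (Real.exp_pos _).le
    positivity
  have hlint_eq : ∫⁻ u in Set.Ioi 0, ENNReal.ofReal (Real.exp (-u) / Real.sqrt u *
      ∑' j, Real.exp (-(t^2/(4*u)) * a j))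
      = ∑' j, ENNReal.ofReal (Real.sqrt Real.pi * Real.exp (-(t * Real.sqrt (a j)))) := by
    rw [htonelli]
    exact lintegral_congr_ae hcongr_ae.symm
  have hintegrable : IntegrableOn (fun u => Real.exp (-u) / Real.sqrt u *
      ∑' j, Real.exp (-(t^2/(4*u)) * a j)) (Set.Ioi 0) := by
    refine ⟨haemeas, ?_⟩
    rw [MeasureTheory.hasFiniteIntegral_iff_ofReal hnn', hlint_eq]
    exact hTfin.lt_top
  refine ⟨hintegrable, ?_⟩
  -- final value identity
  rw [MeasureTheory.integral_eq_lintegral_of_nonneg_ae hnn' haemeas, hlint_eq]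
  have : ∀ j, ENNReal.ofReal (Real.sqrt Real.pi * Real.exp (-(t * Real.sqrt (a j)))) ≠ ⊤ :=
    fun j => ENNReal.ofReal_ne_top
  rw [ENNReal.tsum_toReal_eq this]
  have h2 : (fun j => (ENNReal.ofReal (Real.sqrt Real.pi *
      Real.exp (-(t * Real.sqrt (a j))))).toReal)
      = fun j => Real.sqrt Real.pi * Real.exp (-(t * Real.sqrt (a j))) := by
    funext j
    rw [ENNReal.toReal_ofReal (by positivity)]
  rw [h2, tsum_mul_left]
  congr 1
  exact tsum_congr fun j => by rw [neg_mul]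

lemma g_integrable : IntegrableOn (fun u : ℝ => Real.exp (-u) / Real.sqrt u) (Set.Ioi 0) := by
  have hg : IntegrableOn (fun u : ℝ => Real.exp (-u) * u ^ ((1:ℝ)/2 - 1)) (Set.Ioi 0) :=
    Real.GammaIntegral_convergent (by norm_num)
  refine IntegrableOn.congr_fun hg (fun u hu => ?_) measurableSet_Ioi
  have hu' : (0:ℝ) < u := hu
  rw [div_eq_mul_inv (Real.exp (-u)) (Real.sqrt u), sqrt_inv_rpow hu']

-- the finiteness hypothesis of stepA, for K = m/2
lemma hfin_proof (m : ℕ) (t : ℝ) (ht : 0 < t) (a : ℕ → ℝ) (ha : ∀ j, 0 ≤ a j)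
    (hsum : ∀ s : ℝ, 0 < s → Summable fun j => Real.exp (-s * a j))
    (c : ℕ → ℝ) (C : ℝ) (hC : 0 ≤ C)
    (hCb : ∀ s : ℝ, 0 < s →
      |(∑' j, Real.exp (-s * a j)) -
          ∑ k ∈ Finset.range (m / 2 + 1), c k * s ^ ((k : ℝ) - (m : ℝ) / 2)| ≤ C) :
    ∫⁻ u in Set.Ioi 0,
        ∑' j, ENNReal.ofReal (Real.exp (-u) / Real.sqrt u * Real.exp (-(t^2/(4*u)) * a j)) ≠ ⊤ := by
  have hα : ∀ k ∈ Finset.range (m / 2 + 1), ((k : ℝ) - (m : ℝ)/2) < 1/2 := by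
    intro k hk
    have hk' : k ≤ m / 2 := Nat.lt_succ_iff.mp (Finset.mem_range.mp hk)
    have : ((m / 2 : ℕ) : ℝ) ≤ (m : ℝ) / 2 := Nat.cast_div_le
    have : (k : ℝ) ≤ (m : ℝ) / 2 := le_trans (by exact_mod_cast hk') this
    linarith
  set Bnd : ℝ → ℝ := fun u => C * (Real.exp (-u) / Real.sqrt u) +
    ∑ k ∈ Finset.range (m / 2 + 1),
      |c k| * (Real.exp (-u) / Real.sqrt u * (t^2/(4*u)) ^ ((k : ℝ) - (m : ℝ)/2)) with hBnd
  have hBndInt : IntegrableOn Bnd (Set.Ioi 0) := by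
    exact (g_integrable.const_mul C).add (MeasureTheory.integrable_finset_sum _
      (fun k hk => ((gamma_term t _ ht (hα k hk)).1).const_mul _))
  have hBndnn : ∀ u ∈ Set.Ioi (0:ℝ), 0 ≤ Bnd u := by
    intro u hu
    have hu' : (0:ℝ) < u := hu
    apply add_nonneg (by positivity)
    apply Finset.sum_nonneg
    intro k hk
    positivity
  -- pointwise bound of the ENNReal sum
  have hpt : ∀ u ∈ Set.Ioi (0:ℝ),
      ∑' j, ENNReal.ofReal (Real.exp (-u) / Real.sqrt u * Real.exp (-(t^2/(4*u)) * a j))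
      ≤ ENNReal.ofReal (Bnd u) := by
    intro u hu
    have hu' : (0:ℝ) < u := hu
    have hs : (0:ℝ) < t^2/(4*u) := by positivity
    have hsummand := hsum _ hs
    have hg : (0:ℝ) ≤ Real.exp (-u) / Real.sqrt u := by positivity
    have hH : (∑' j, Real.exp (-(t^2/(4*u)) * a j)) ≤
        C + ∑ k ∈ Finset.range (m / 2 + 1),
          |c k| * (t^2/(4*u)) ^ ((k : ℝ) - (m : ℝ)/2) := by
      have h1 := abs_le.mp (hCb _ hs)
      have h2 : ∑ k ∈ Finset.range (m / 2 + 1), c k * (t^2/(4*u)) ^ ((k : ℝ) - (m : ℝ)/2)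
          ≤ ∑ k ∈ Finset.range (m / 2 + 1), |c k| * (t^2/(4*u)) ^ ((k : ℝ) - (m : ℝ)/2) := by
        apply Finset.sum_le_sum
        intro k hk
        apply mul_le_mul_of_nonneg_right (le_abs_self _) (Real.rpow_nonneg hs.le _)
      linarith [h1.2]
    calc ∑' j, ENNReal.ofReal (Real.exp (-u) / Real.sqrt u * Real.exp (-(t^2/(4*u)) * a j))
        = ENNReal.ofReal (Real.exp (-u) / Real.sqrt u * ∑' j, Real.exp (-(t^2/(4*u)) * a j)) := by
          rw [tsum_congr (fun j => ENNReal.ofReal_mul hg), ENNReal.tsum_mul_left,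
            ← ENNReal.ofReal_tsum_of_nonneg (fun j => (Real.exp_pos _).le) hsummand,
            ← ENNReal.ofReal_mul hg]
      _ ≤ ENNReal.ofReal (Bnd u) := by
          apply ENNReal.ofReal_le_ofReal
          rw [hBnd]
          simp only [Finset.mul_sum]
          have := mul_le_mul_of_nonneg_left hH hg
          calc Real.exp (-u) / Real.sqrt u * ∑' j, Real.exp (-(t^2/(4*u)) * a j)
              ≤ Real.exp (-u) / Real.sqrt u * (C + ∑ k ∈ Finset.range (m / 2 + 1),
                |c k| * (t^2/(4*u)) ^ ((k : ℝ) - (m : ℝ)/2)) := this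
            _ = C * (Real.exp (-u) / Real.sqrt u) + ∑ k ∈ Finset.range (m / 2 + 1),
                Real.exp (-u) / Real.sqrt u * (|c k| * (t^2/(4*u)) ^ ((k : ℝ) - (m : ℝ)/2)) := by
                rw [mul_add, Finset.mul_sum]; ring
            _ = C * (Real.exp (-u) / Real.sqrt u) + ∑ k ∈ Finset.range (m / 2 + 1),
                |c k| * (Real.exp (-u) / Real.sqrt u * (t^2/(4*u)) ^ ((k : ℝ) - (m : ℝ)/2)) := by
                congr 1
                exact Finset.sum_congr rfl fun k _ => by ring
    
  have hle : ∫⁻ u in Set.Ioi 0,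
      ∑' j, ENNReal.ofReal (Real.exp (-u) / Real.sqrt u * Real.exp (-(t^2/(4*u)) * a j))
      ≤ ∫⁻ u in Set.Ioi 0, ENNReal.ofReal (Bnd u) := by
    apply MeasureTheory.lintegral_mono_ae
    filter_upwards [ae_restrict_mem measurableSet_Ioi] with u hu
    exact hpt u hu
  have hBfin : ∫⁻ u in Set.Ioi 0, ENNReal.ofReal (Bnd u) ≠ ⊤ := by
    rw [← MeasureTheory.ofReal_integral_eq_lintegral_ofReal hBndInt
      ((ae_restrict_iff' measurableSet_Ioi).2 (Filter.Eventually.of_forall hBndnn))]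
    exact ENNReal.ofReal_ne_top
  exact ne_top_of_le_ne_top hBfin hle

-- stepB
lemma stepB (m : ℕ) (t : ℝ) (ht : 0 < t) (c : ℕ → ℝ)
    (hα : ∀ k ∈ Finset.range (m / 2 + 1), ((k : ℝ) - (m : ℝ)/2) < 1/2) :
    IntegrableOn (fun u : ℝ => Real.exp (-u) / Real.sqrt u *
      ∑ k ∈ Finset.range (m / 2 + 1), c k * (t^2/(4*u)) ^ ((k : ℝ) - (m : ℝ)/2)) (Set.Ioi 0) ∧
    ∫ u in Set.Ioi 0, Real.exp (-u) / Real.sqrt u *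
      ∑ k ∈ Finset.range (m / 2 + 1), c k * (t^2/(4*u)) ^ ((k : ℝ) - (m : ℝ)/2)
    = Real.sqrt Real.pi * ∑ k ∈ Finset.range (m / 2 + 1),
        (2 : ℝ) ^ ((m : ℝ) - 2 * k) / Real.sqrt Real.pi *
          Real.Gamma (((m : ℝ) - 2 * k + 1) / 2) * c k * t ^ (2 * (k : ℝ) - m) := by
  have hfun : ∀ u : ℝ, Real.exp (-u) / Real.sqrt u *
      ∑ k ∈ Finset.range (m / 2 + 1), c k * (t^2/(4*u)) ^ ((k : ℝ) - (m : ℝ)/2)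
      = ∑ k ∈ Finset.range (m / 2 + 1),
        c k * (Real.exp (-u) / Real.sqrt u * (t^2/(4*u)) ^ ((k : ℝ) - (m : ℝ)/2)) := by
    intro u
    rw [Finset.mul_sum]
    exact Finset.sum_congr rfl fun k _ => by ring
  have hint : ∀ k ∈ Finset.range (m / 2 + 1), IntegrableOn
      (fun u : ℝ => c k * (Real.exp (-u) / Real.sqrt u *
        (t^2/(4*u)) ^ ((k : ℝ) - (m : ℝ)/2))) (Set.Ioi 0) :=
    fun k hk => ((gamma_term t _ ht (hα k hk)).1).const_mul _
  constructor
  · exact IntegrableOn.congr_fun (MeasureTheory.integrable_finset_sum _ hint)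
      (fun u _ => (hfun u).symm) measurableSet_Ioi
  · rw [MeasureTheory.setIntegral_congr_fun measurableSet_Ioi (fun u _ => hfun u),
      MeasureTheory.integral_finset_sum _ hint, Finset.mul_sum]
    apply Finset.sum_congr rfl
    intro k hk
    rw [MeasureTheory.integral_const_mul, (gamma_term t _ ht (hα k hk)).2]
    have hπ : Real.sqrt Real.pi ≠ 0 := by positivity
    have e1 : -2 * ((k : ℝ) - (m : ℝ)/2) = (m : ℝ) - 2 * k := by ring
    have e2 : 2 * ((k : ℝ) - (m : ℝ)/2) = 2 * (k : ℝ) - m := by ring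
    have e3 : 1/2 - ((k : ℝ) - (m : ℝ)/2) = ((m : ℝ) - 2 * k + 1) / 2 := by ring
    rw [e1, e2, e3]
    field_simp

/-- small-time development of the Poisson trace from that of the heat trace.
If `∑_j e^{-t a_j}` has the development `∑_{k=0}^{⌊m/2⌋} c_k t^{k - m/2} + B(t)` with `B`
bounded on `(0,∞)` and `B(t) → 0` as `t → 0⁺`, then `∑_j e^{-t √(a_j)}` converges for all
`t > 0` and has the development
`∑_{k=0}^{⌊m/2⌋} (2^{m-2k}/√π) Γ((m-2k+1)/2) c_k t^{2k-m} + o(1)` as `t → 0⁺`. -/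
theorem stmt2 (m : ℕ) (hm : 1 ≤ m) (a : ℕ → ℝ) (ha : ∀ j, 0 ≤ a j)
    (hsum : ∀ t : ℝ, 0 < t → Summable fun j => Real.exp (-t * a j))
    (c : ℕ → ℝ)
    (hBbdd : ∃ C : ℝ, ∀ t : ℝ, 0 < t →
      |(∑' j, Real.exp (-t * a j)) -
          ∑ k ∈ Finset.range (m / 2 + 1), c k * t ^ ((k : ℝ) - (m : ℝ) / 2)| ≤ C)
    (hB0 : Tendsto
      (fun t : ℝ => (∑' j, Real.exp (-t * a j)) -
          ∑ k ∈ Finset.range (m / 2 + 1), c k * t ^ ((k : ℝ) - (m : ℝ) / 2))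
      (nhdsWithin 0 (Set.Ioi 0)) (nhds 0)) :
    (∀ t : ℝ, 0 < t → Summable fun j => Real.exp (-t * Real.sqrt (a j))) ∧
      Tendsto
        (fun t : ℝ => (∑' j, Real.exp (-t * Real.sqrt (a j))) -
            ∑ k ∈ Finset.range (m / 2 + 1),
              (2 : ℝ) ^ ((m : ℝ) - 2 * k) / Real.sqrt Real.pi *
                Real.Gamma (((m : ℝ) - 2 * k + 1) / 2) * c k * t ^ (2 * (k : ℝ) - m))
        (nhdsWithin 0 (Set.Ioi 0)) (nhds 0) := by
  obtain ⟨C, hCb⟩ := hBbdd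
  have hC0 : 0 ≤ C := le_trans (abs_nonneg _) (hCb 1 one_pos)
  have hα : ∀ k ∈ Finset.range (m / 2 + 1), ((k : ℝ) - (m : ℝ)/2) < 1/2 := by
    intro k hk
    have hk' : k ≤ m / 2 := Nat.lt_succ_iff.mp (Finset.mem_range.mp hk)
    have h1 : ((m / 2 : ℕ) : ℝ) ≤ (m : ℝ) / 2 := Nat.cast_div_le
    have h2 : (k : ℝ) ≤ (m : ℝ) / 2 := le_trans (by exact_mod_cast hk') h1
    linarith
  have hπ : Real.sqrt Real.pi ≠ 0 := by positivity
  -- step A, for every t > 0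
  have hA := fun (t : ℝ) (ht : 0 < t) => stepA t ht a ha hsum
    (hfin_proof m t ht a ha hsum c C hC0 (fun s hs => hCb s hs))
  refine ⟨fun t ht => (hA t ht).1, ?_⟩
  have hb := fun (t : ℝ) (ht : 0 < t) => stepB m t ht c hα
  -- the key identity on (0, ∞)
  have key : ∀ t : ℝ, 0 < t →
      (∑' j, Real.exp (-t * Real.sqrt (a j))) -
        ∑ k ∈ Finset.range (m / 2 + 1),
          (2 : ℝ) ^ ((m : ℝ) - 2 * k) / Real.sqrt Real.pi *
            Real.Gamma (((m : ℝ) - 2 * k + 1) / 2) * c k * t ^ (2 * (k : ℝ) - m)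
      = (Real.sqrt Real.pi)⁻¹ *
        ∫ u in Set.Ioi 0,
          (Real.exp (-u) / Real.sqrt u * ∑' j, Real.exp (-(t^2/(4*u)) * a j)
            - Real.exp (-u) / Real.sqrt u *
              ∑ k ∈ Finset.range (m / 2 + 1), c k * (t^2/(4*u)) ^ ((k : ℝ) - (m : ℝ)/2)) := by
    intro t ht
    rw [MeasureTheory.integral_sub (hA t ht).2.1 (hb t ht).1, ← (hA t ht).2.2, (hb t ht).2]
    field_simp
  -- dominated convergence
  have hDCT : Tendsto
      (fun t : ℝ => ∫ u in Set.Ioi 0,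
          (Real.exp (-u) / Real.sqrt u * ∑' j, Real.exp (-(t^2/(4*u)) * a j)
            - Real.exp (-u) / Real.sqrt u *
              ∑ k ∈ Finset.range (m / 2 + 1), c k * (t^2/(4*u)) ^ ((k : ℝ) - (m : ℝ)/2)))
      (nhdsWithin 0 (Set.Ioi 0)) (nhds 0) := by
    have h0 : Tendsto
        (fun t : ℝ => ∫ u in Set.Ioi 0,
            (Real.exp (-u) / Real.sqrt u * ∑' j, Real.exp (-(t^2/(4*u)) * a j)
              - Real.exp (-u) / Real.sqrt u *
                ∑ k ∈ Finset.range (m / 2 + 1), c k * (t^2/(4*u)) ^ ((k : ℝ) - (m : ℝ)/2)))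
        (nhdsWithin 0 (Set.Ioi 0)) (nhds (∫ (_ : ℝ) in Set.Ioi (0:ℝ), (0:ℝ))) := by
      apply MeasureTheory.tendsto_integral_filter_of_dominated_convergence
        (fun u => C * (Real.exp (-u) / Real.sqrt u))
      · filter_upwards [self_mem_nhdsWithin] with t ht
        exact ((hA t ht).2.1.1).sub ((hb t ht).1.1)
      · filter_upwards [self_mem_nhdsWithin] with t ht
        filter_upwards [ae_restrict_mem measurableSet_Ioi] with u hu
        have hu' : (0:ℝ) < u := hu
        have ht' : (0:ℝ) < t := ht
        have hs : (0:ℝ) < t^2/(4*u) := by positivity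
        have hg : (0:ℝ) ≤ Real.exp (-u) / Real.sqrt u := by positivity
        rw [← mul_sub, Real.norm_eq_abs, abs_mul, abs_of_nonneg hg]
        calc Real.exp (-u) / Real.sqrt u *
              |(∑' j, Real.exp (-(t^2/(4*u)) * a j)) -
                ∑ k ∈ Finset.range (m / 2 + 1), c k * (t^2/(4*u)) ^ ((k : ℝ) - (m : ℝ)/2)|
            ≤ Real.exp (-u) / Real.sqrt u * C :=
              mul_le_mul_of_nonneg_left (hCb _ hs) hg
          _ = C * (Real.exp (-u) / Real.sqrt u) := by ring
      · exact g_integrable.const_mul C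
      · filter_upwards [ae_restrict_mem measurableSet_Ioi] with u hu
        have hu' : (0:ℝ) < u := hu
        have hscomp : Tendsto (fun t : ℝ => t^2/(4*u)) (nhdsWithin 0 (Set.Ioi 0))
            (nhdsWithin 0 (Set.Ioi 0)) := by
          apply tendsto_nhdsWithin_of_tendsto_nhds_of_eventually_within
          · have : Tendsto (fun t : ℝ => t^2/(4*u)) (nhds 0) (nhds ((0:ℝ)^2/(4*u))) :=
              ((continuous_pow 2).div_const (4*u)).tendsto 0
            simpa using this.mono_left nhdsWithin_le_nhds
          · filter_upwards [self_mem_nhdsWithin] with t ht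
            have ht' : (0:ℝ) < t := ht
            exact Set.mem_Ioi.mpr (by positivity)
        have hcomp := hB0.comp hscomp
        have : Tendsto (fun t : ℝ => Real.exp (-u) / Real.sqrt u *
            ((∑' j, Real.exp (-(t^2/(4*u)) * a j)) -
              ∑ k ∈ Finset.range (m / 2 + 1), c k * (t^2/(4*u)) ^ ((k : ℝ) - (m : ℝ)/2)))
            (nhdsWithin 0 (Set.Ioi 0)) (nhds (Real.exp (-u) / Real.sqrt u * 0)) := by
          apply Tendsto.const_mul
          exact hcomp
        rw [mul_zero] at this
        apply this.congr
        intro t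
        ring
    simpa using h0
  have := hDCT.const_mul (Real.sqrt Real.pi)⁻¹
  rw [mul_zero] at this
  apply this.congr'
  filter_upwards [self_mem_nhdsWithin] with t ht
  exact (key t ht).symm
end

section
/- Let (ℓ_j)_{j∈ℕ} be positive reals and (w_j)_{j∈ℕ} complex numbers such that Σ_j |w_j|·ℓ_j^{σ} < ∞ for every real σ < −1. Then for every real s < 0: (i) for each t > 0 the series Σ_j |w_j|·e^{−ℓ_j²/(4t)} converges; (ii) the function t ↦ t^{s−1}·(πt)^{−1/2}·Σ_j w_j·e^{−ℓ_j²/(4t)} is Lebesgue integrable on (0,∞); and (iii) ∫_0^∞ t^{s−1}·(πt)^{−1/2}·(Σ_j w_j·e^{−ℓ_j²/(4t)}) dt = (2^{1−2s}/√π)·Γ(1/2 − s)·Σ_j w_j·ℓ_j^{2s−1}, the last series converging absolutely. -/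
open MeasureTheory Set Filter

lemma my_integrable_tsum {α : Type*} [MeasurableSpace α] {μ : Measure α} {f : ℕ → α → ℂ}
    (hf : ∀ i, Integrable (f i) μ) (h : Summable fun i => ∫ a, ‖f i a‖ ∂μ) :
    Integrable (fun a => ∑' i, f i a) μ := by
  have hf'' : ∀ i, AEMeasurable (fun x => (‖f i x‖₊ : ENNReal)) μ := fun i => (hf i).1.enorm
  have hf' : ∑' i, ∫⁻ a, ‖f i a‖₊ ∂μ ≠ ⊤ := by
    rw [funext fun i => (show ENNReal.ofReal _ = ∫⁻ a, (‖f i a‖₊ : ENNReal) ∂μ from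
        ofReal_integral_norm_eq_lintegral_enorm (hf i)).symm,
      ← ENNReal.ofReal_tsum_of_nonneg (fun i => integral_nonneg fun a => norm_nonneg _) h]
    exact ENNReal.ofReal_ne_top
  have hhh : ∀ᵐ a ∂μ, Summable fun n => ‖f n a‖ := by
    rw [← lintegral_tsum hf''] at hf'
    refine (ae_lt_top' (AEMeasurable.ennreal_tsum hf'') hf').mono fun x hx => ?_
    have := ENNReal.tsum_coe_ne_top_iff_summable_coe.mp hx.ne
    simpa [coe_nnnorm] using this
  have hmeas : AEStronglyMeasurable (fun a => ∑' i, f i a) μ := by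
    refine aestronglyMeasurable_of_tendsto_ae atTop
      (fun n => Finset.aestronglyMeasurable_sum (Finset.range n) fun i _ => (hf i).1) ?_
    filter_upwards [hhh] with a ha
    simpa only [Finset.sum_apply] using ha.of_norm.hasSum.tendsto_sum_nat
  refine ⟨hmeas, ?_⟩
  have hbound : ∫⁻ a, ‖∑' i, f i a‖₊ ∂μ ≤ ∑' i, ∫⁻ a, ‖f i a‖₊ ∂μ := by
    rw [← lintegral_tsum hf'']
    refine lintegral_mono_ae ?_
    filter_upwards [hhh] with a ha
    have hann : Summable fun i => ‖f i a‖₊ := by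
      rw [← NNReal.summable_coe]; simpa [coe_nnnorm] using ha
    calc (‖∑' i, f i a‖₊ : ENNReal) ≤ ((∑' i, ‖f i a‖₊ : NNReal) : ENNReal) :=
        ENNReal.coe_le_coe.mpr (nnnorm_tsum_le hann)
      _ = ∑' i, (‖f i a‖₊ : ENNReal) := ENNReal.coe_tsum hann
  exact lt_of_le_of_lt hbound hf'.lt_top

lemma key_integral {b c : ℝ} (hc : 0 < c) (hb : b < -1) :
    IntegrableOn (fun t : ℝ => t ^ b * Real.exp (-c / t)) (Ioi 0) ∧
    ∫ t in Ioi (0:ℝ), t ^ b * Real.exp (-c / t) = c ^ (b + 1) * Real.Gamma (-b - 1) := by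
  have hg_int : IntegrableOn (fun u : ℝ => u ^ (-b - 2) * Real.exp (-(c * u))) (Ioi 0) := by
    have := integrableOn_rpow_mul_exp_neg_mul_rpow (p := 1) (s := -b - 2) (b := c)
      (by linarith) one_pos hc
    simpa [Real.rpow_one, neg_mul] using this
  have heq : ∀ x ∈ Ioi (0:ℝ), x ^ ((-1:ℝ) - 1) •
      ((x ^ (-1:ℝ)) ^ (-b - 2) * Real.exp (-(c * x ^ (-1:ℝ)))) = x ^ b * Real.exp (-c / x) := by
    intro x hx
    have hx0 : (0:ℝ) < x := hx
    have e1 : ((-1:ℝ) - 1) + (-1) * (-b - 2) = b := by ring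
    rw [smul_eq_mul, ← Real.rpow_mul hx0.le, ← mul_assoc, ← Real.rpow_add hx0, e1,
      Real.rpow_neg_one]
    have e2 : -(c * x⁻¹) = -c / x := by field_simp
    rw [e2]
  have hint : IntegrableOn (fun t : ℝ => t ^ b * Real.exp (-c / t)) (Ioi 0) := by
    have := (integrableOn_Ioi_comp_rpow_iff'
      (fun u : ℝ => u ^ (-b - 2) * Real.exp (-(c * u))) (p := (-1:ℝ)) (by norm_num)).mpr hg_int
    exact this.congr_fun heq measurableSet_Ioi
  refine ⟨hint, ?_⟩
  have hI : ∫ u in Ioi (0:ℝ), u ^ (-b - 2) * Real.exp (-(c * u))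
      = ∫ t in Ioi (0:ℝ), t ^ b * Real.exp (-c / t) := by
    rw [← integral_comp_rpow_Ioi (fun u : ℝ => u ^ (-b - 2) * Real.exp (-(c * u)))
      (p := (-1:ℝ)) (by norm_num)]
    refine setIntegral_congr_fun measurableSet_Ioi fun x hx => ?_
    rw [← heq x hx]
    simp [abs_of_nonpos, smul_eq_mul]
  have hg_val : ∫ u in Ioi (0:ℝ), u ^ (-b - 2) * Real.exp (-(c * u))
      = (1 / c) ^ (-b - 1) * Real.Gamma (-b - 1) := by
    rw [show (-b - 2 : ℝ) = (-b - 1) - 1 by ring]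
    exact Real.integral_rpow_mul_exp_neg_mul_Ioi (by linarith) hc
  rw [← hI, hg_val]
  congr 1
  rw [one_div, ← Real.rpow_neg_one c, ← Real.rpow_mul hc.le,
    show ((-1:ℝ) * (-b - 1)) = b + 1 by ring]

/-- equation (68) of the paper: Mellin transform of the dynamical theta
function.  If `ℓ_j > 0` and `∑_j |w_j| ℓ_j^σ < ∞` for every `σ < -1`, then for every real
`s < 0` the theta series converges, the function
`t ↦ t^{s-1} (πt)^{-1/2} ∑_j w_j e^{-ℓ_j²/(4t)}` is integrable on `(0,∞)`, and its
integral equals `(2^{1-2s}/√π) Γ(1/2-s) ∑_j w_j ℓ_j^{2s-1}`, the last series converging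
absolutely. -/
theorem stmt11 (ℓ : ℕ → ℝ) (hℓ : ∀ j, 0 < ℓ j) (w : ℕ → ℂ)
    (hsum : ∀ σ : ℝ, σ < -1 → Summable fun j => ‖w j‖ * ℓ j ^ σ)
    (s : ℝ) (hs : s < 0) :
    (∀ t : ℝ, 0 < t → Summable fun j => ‖w j‖ * Real.exp (-ℓ j ^ 2 / (4 * t))) ∧
    IntegrableOn
      (fun t : ℝ =>
        ((t ^ (s - 1) * (Real.pi * t) ^ (-(1 : ℝ) / 2) : ℝ) : ℂ) *
          ∑' j, w j * (Real.exp (-ℓ j ^ 2 / (4 * t)) : ℂ))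
      (Set.Ioi 0) ∧
    (Summable fun j => ‖w j‖ * ℓ j ^ (2 * s - 1)) ∧
    ∫ t in Set.Ioi (0 : ℝ),
        ((t ^ (s - 1) * (Real.pi * t) ^ (-(1 : ℝ) / 2) : ℝ) : ℂ) *
          ∑' j, w j * (Real.exp (-ℓ j ^ 2 / (4 * t)) : ℂ) =
      (((2 : ℝ) ^ (1 - 2 * s) / Real.sqrt Real.pi * Real.Gamma (1 / 2 - s) : ℝ) : ℂ) *
        ∑' j, w j * ((ℓ j ^ (2 * s - 1) : ℝ) : ℂ) := by
  have hpi : (0:ℝ) < Real.pi := Real.pi_pos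
  set A : ℝ := Real.pi ^ (-(1:ℝ)/2) with hA_def
  have hA0 : 0 ≤ A := Real.rpow_nonneg hpi.le _
  -- part (i)
  have part1 : ∀ t : ℝ, 0 < t → Summable fun j => ‖w j‖ * Real.exp (-ℓ j ^ 2 / (4 * t)) := by
    intro t ht
    have hsum2 : Summable fun j => ‖w j‖ * ℓ j ^ (-2 : ℝ) := hsum (-2) (by norm_num)
    refine Summable.of_nonneg_of_le
      (fun j => mul_nonneg (norm_nonneg _) (Real.exp_nonneg _)) (fun j => ?_)
      (hsum2.mul_left (4 * t))
    have hx : 0 < ℓ j ^ 2 / (4 * t) := div_pos (pow_pos (hℓ j) 2) (by linarith)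
    have hxle : ℓ j ^ 2 / (4 * t) ≤ Real.exp (ℓ j ^ 2 / (4 * t)) :=
      le_trans (by linarith) (Real.add_one_le_exp _)
    have hexp : Real.exp (-ℓ j ^ 2 / (4 * t)) ≤ (ℓ j ^ 2 / (4 * t))⁻¹ := by
      rw [show -ℓ j ^ 2 / (4 * t) = -(ℓ j ^ 2 / (4 * t)) by ring, Real.exp_neg]
      exact inv_anti₀ hx hxle
    have h2 : ℓ j ^ (-2:ℝ) = (ℓ j ^ 2)⁻¹ := by
      rw [show (-2:ℝ) = -((2:ℕ):ℝ) by norm_num, Real.rpow_neg (hℓ j).le, Real.rpow_natCast]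
    calc ‖w j‖ * Real.exp (-ℓ j ^ 2 / (4 * t)) ≤ ‖w j‖ * (ℓ j ^ 2 / (4 * t))⁻¹ :=
          mul_le_mul_of_nonneg_left hexp (norm_nonneg _)
      _ = 4 * t * (‖w j‖ * ℓ j ^ (-2:ℝ)) := by
          rw [h2, inv_div, div_eq_mul_inv]; ring
  -- summability of zeta series
  have h3 : Summable fun j => ‖w j‖ * ℓ j ^ (2 * s - 1) := hsum _ (by linarith)
  -- the key per-orbit data
  have hckey : ∀ j : ℕ, (0:ℝ) < ℓ j ^ 2 / 4 := fun j => div_pos (pow_pos (hℓ j) 2) (by norm_num)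
  have hkey1 : ∀ j, IntegrableOn
      (fun t : ℝ => t ^ (s - 3/2) * Real.exp (-(ℓ j ^ 2 / 4) / t)) (Ioi 0) :=
    fun j => (key_integral (hckey j) (by linarith)).1
  have hkey2 : ∀ j, ∫ t in Ioi (0:ℝ), t ^ (s - 3/2) * Real.exp (-(ℓ j ^ 2 / 4) / t)
      = (ℓ j ^ 2 / 4) ^ (s - 1/2) * Real.Gamma (1/2 - s) := by
    intro j
    have := (key_integral (hckey j) (by linarith : s - 3/2 < -1)).2
    rw [show s - 3/2 + 1 = s - 1/2 by ring, show -(s - 3/2) - 1 = 1/2 - s by ring] at this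
    exact this
  have hc4 : ∀ j, ((ℓ j ^ 2 / 4 : ℝ)) ^ (s - 1/2) = (2:ℝ) ^ (1 - 2*s) * ℓ j ^ (2*s - 1) := by
    intro j
    have h2 : (ℓ j ^ 2 / 4 : ℝ) = (ℓ j / 2) ^ 2 := by ring
    rw [h2, ← Real.rpow_natCast (ℓ j / 2) 2, ← Real.rpow_mul (div_nonneg (hℓ j).le (by norm_num) : (0:ℝ) ≤ ℓ j / 2),
      show ((2:ℕ):ℝ) * (s - 1/2) = 2*s - 1 by push_cast; ring,
      Real.div_rpow (hℓ j).le (by norm_num : (0:ℝ) ≤ 2),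
      div_eq_mul_inv, ← Real.rpow_neg (by norm_num : (0:ℝ) ≤ 2),
      show -(2*s - 1) = 1 - 2*s by ring]
    ring
  have hφ : ∀ t ∈ Ioi (0:ℝ), t ^ (s - 1) * (Real.pi * t) ^ (-(1:ℝ)/2)
      = A * t ^ (s - 3/2) := by
    intro t ht
    have ht0 : (0:ℝ) < t := ht
    rw [Real.mul_rpow hpi.le ht0.le, ← mul_assoc, mul_comm (t ^ (s - 1)) _, mul_assoc,
      ← Real.rpow_add ht0, hA_def, show s - 1 + -(1:ℝ)/2 = s - 3/2 by ring]
  have hexp_eq : ∀ j : ℕ, ∀ t : ℝ, -(ℓ j ^ 2 / 4) / t = -ℓ j ^ 2 / (4 * t) := by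
    intro j t; rw [← neg_div, div_div]
  set H : ℕ → ℝ → ℂ := fun j t =>
    ((t ^ (s - 1) * (Real.pi * t) ^ (-(1:ℝ)/2) : ℝ) : ℂ) *
      (w j * (Real.exp (-ℓ j ^ 2 / (4 * t)) : ℂ)) with hH_def
  have hHeq : ∀ j, ∀ t ∈ Ioi (0:ℝ),
      H j t = w j * ((A * (t ^ (s - 3/2) * Real.exp (-(ℓ j ^ 2 / 4) / t)) : ℝ) : ℂ) := by
    intro j t ht
    rw [hH_def]
    simp only
    rw [hφ t ht, ← hexp_eq j t]
    push_cast
    ring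
  have Hint : ∀ j, IntegrableOn (H j) (Ioi 0) := by
    intro j
    have base : Integrable
        (fun t : ℝ => w j * ((A * (t ^ (s - 3/2) * Real.exp (-(ℓ j ^ 2 / 4) / t)) : ℝ) : ℂ))
        (volume.restrict (Ioi 0)) :=
      (((hkey1 j).const_mul A).ofReal).const_mul (w j)
    exact IntegrableOn.congr_fun base (fun t ht => (hHeq j t ht).symm) measurableSet_Ioi
  have hnorm : ∀ j, ∫ t in Ioi (0:ℝ), ‖H j t‖
      = ‖w j‖ * (A * ((2:ℝ) ^ (1 - 2*s) * ℓ j ^ (2*s - 1) * Real.Gamma (1/2 - s))) := by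
    intro j
    have : ∀ t ∈ Ioi (0:ℝ), ‖H j t‖
        = ‖w j‖ * (A * (t ^ (s - 3/2) * Real.exp (-(ℓ j ^ 2 / 4) / t))) := by
      intro t ht
      have ht0 : (0:ℝ) < t := ht
      rw [hHeq j t ht, norm_mul, Complex.norm_real, Real.norm_eq_abs,
        abs_of_nonneg (mul_nonneg hA0 (mul_nonneg (Real.rpow_nonneg ht0.le _)
          (Real.exp_nonneg _)))]
    rw [setIntegral_congr_fun measurableSet_Ioi this, integral_const_mul, integral_const_mul,
      hkey2 j, hc4 j]
  have hsummaInt : Summable fun j => ∫ t in Ioi (0:ℝ), ‖H j t‖ := by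
    refine Summable.congr ((h3.mul_left
      (A * ((2:ℝ) ^ (1 - 2*s) * Real.Gamma (1/2 - s))))) fun j => ?_
    rw [hnorm j]; ring
  have hHS := hasSum_integral_of_summable_integral_norm
    (μ := volume.restrict (Ioi 0)) (F := H) Hint hsummaInt
  have hfun : (fun t : ℝ => ((t ^ (s - 1) * (Real.pi * t) ^ (-(1:ℝ)/2) : ℝ) : ℂ) *
      ∑' j, w j * (Real.exp (-ℓ j ^ 2 / (4 * t)) : ℂ)) = fun t => ∑' j, H j t := by
    funext t
    rw [hH_def]
    exact tsum_mul_left.symm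
  have hA' : A = (Real.sqrt Real.pi)⁻¹ := by
    rw [hA_def, Real.sqrt_eq_rpow, ← Real.rpow_neg hpi.le]
    norm_num
  have hIj : ∀ j, ∫ t in Ioi (0:ℝ), H j t
      = (((2:ℝ) ^ (1 - 2*s) / Real.sqrt Real.pi * Real.Gamma (1/2 - s) : ℝ) : ℂ) *
        (w j * ((ℓ j ^ (2*s - 1) : ℝ) : ℂ)) := by
    intro j
    have hcast : (∫ t in Ioi (0:ℝ), ((A * (t ^ (s - 3/2) * Real.exp (-(ℓ j ^ 2 / 4) / t)) : ℝ) : ℂ))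
        = ((∫ t in Ioi (0:ℝ), A * (t ^ (s - 3/2) * Real.exp (-(ℓ j ^ 2 / 4) / t)) : ℝ) : ℂ) :=
      integral_ofReal
    rw [setIntegral_congr_fun measurableSet_Ioi (hHeq j), integral_const_mul, hcast,
      integral_const_mul, hkey2 j, hc4 j]
    push_cast [hA']
    rw [div_eq_mul_inv]
    ring
  refine ⟨part1, ?_, h3, ?_⟩
  · rw [hfun]
    exact my_integrable_tsum Hint hsummaInt
  · rw [hfun, ← hHS.tsum_eq, tsum_congr hIj, tsum_mul_left]
end

section
/- Let d be a positive integer, χ* an integer, I a finite index set, and for each i ∈ I let α_i be a positive integer. Let x ∈ (0,1), and for each i ∈ I and j ∈ {1,…,d} let x_{i,j} ∈ (0,1) satisfy α_i·x_{i,j} − x ∈ ℤ. Then for every s ∈ ℂ with Re(s) < 0 and s ∉ ℤ: Γ(s)·cos(πs/2)·[ d·χ*·(ζ(s,x) + ζ(s,1−x)) + Σ_{i∈I} Σ_{j=1}^{d} α_i^{−s}·(ζ(s,x_{i,j}) + ζ(s,1−x_{i,j})) ] = Σ_{n=1}^{∞} (χ* + Σ_{i∈I} 1/α_i)·d·cos(2πnx)·(2πn)^s/n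 + Σ_{i∈I} Σ_{n≥1, α_i ∤ n} (Σ_{j=1}^{d} cos(2πn·x_{i,j}))·(2πn/α_i)^s / n, where all series converge absolutely. -/
open HurwitzZeta

private lemma L1 (a : ℝ) {s : ℂ} (hs : s.re < 0) :
    HasSum (fun n : ℕ => ((Real.cos (2 * Real.pi * ((n : ℝ) + 1) * a) : ℝ) : ℂ) *
        ((2 * Real.pi * ((n : ℝ) + 1) : ℝ) : ℂ) ^ s / ((n : ℂ) + 1))
      ((2 * (Real.pi : ℂ)) ^ s * cosZeta a (1 - s)) := by
  have h1 : 1 < (1 - s).re := by simp [Complex.sub_re]; linarith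
  have H := (hasSum_nat_cosZeta a h1).mul_left ((2 * (Real.pi : ℂ)) ^ s)
  have H2 := (hasSum_nat_add_iff' 1).mpr H
  simp only [Finset.range_one, Finset.sum_singleton, Nat.cast_zero,
    Complex.zero_cpow (by intro h; apply_fun Complex.re at h; simp at h; linarith :
      (1 : ℂ) - s ≠ 0),
    div_zero, mul_zero, sub_zero] at H2
  refine H2.congr_fun fun n => ?_
  have hn1 : ((n : ℂ) + 1) ≠ 0 := Nat.cast_add_one_ne_zero n
  have hcast : ((n + 1 : ℕ) : ℂ) = (n : ℂ) + 1 := by push_cast; ring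
  rw [hcast]
  have hpow : ((n : ℂ) + 1) ^ ((1 : ℂ) - s) = ((n : ℂ) + 1) * (((n : ℂ) + 1) ^ s)⁻¹ := by
    rw [Complex.cpow_sub _ _ hn1, Complex.cpow_one, div_eq_mul_inv]
  have hmul : ((2 * Real.pi * ((n : ℝ) + 1) : ℝ) : ℂ) ^ s
      = (2 * (Real.pi : ℂ)) ^ s * (((n : ℂ) + 1)) ^ s := by
    have h := Complex.mul_cpow_ofReal_nonneg (a := 2 * Real.pi) (b := (n : ℝ) + 1)
      (by positivity) (by positivity) s
    push_cast at h ⊢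
    rw [h]
  have hns : ((n : ℂ) + 1) ^ s ≠ 0 := by
    rw [Ne, Complex.cpow_eq_zero_iff]
    exact fun h => hn1 h.1
  rw [hpow, hmul]
  push_cast
  rw [show (2 * (Real.pi : ℂ) * ((n : ℂ) + 1) * (a : ℂ))
      = 2 * (Real.pi : ℂ) * (a : ℂ) * ((n : ℂ) + 1) by ring]
  field_simp

private lemma L2 (a : ℝ) {s : ℂ} (hsz : ∀ n : ℤ, s ≠ (n : ℂ)) :
    Complex.Gamma s * Complex.cos (Real.pi * s / 2) *
      (hurwitzZeta (a : UnitAddCircle) s + hurwitzZeta ((1 - a : ℝ) : UnitAddCircle) s)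
    = (2 * (Real.pi : ℂ)) ^ s * cosZeta a (1 - s) := by
  have hcirc : ((1 - a : ℝ) : UnitAddCircle) = -((a : ℝ) : UnitAddCircle) := by
    have : (1 - a : ℝ) = -a + 1 := by ring
    rw [this, AddCircle.coe_add_period]
    simp [QuotientAddGroup.mk_neg]
  have hkey := cosZeta_one_sub (a : UnitAddCircle) (s := s)
    (fun n => by simpa using hsz (1 - n))
  rw [hcirc, show hurwitzZeta (a : UnitAddCircle) s + hurwitzZeta (-(a : UnitAddCircle)) s
      = 2 * hurwitzZetaEven (a : UnitAddCircle) s by rw [hurwitzZetaEven_eq]; ring,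
    hkey]
  have hne : (2 * (Real.pi : ℂ)) ^ s ≠ 0 := by
    rw [Ne, Complex.cpow_eq_zero_iff]
    simp [Real.pi_ne_zero, Complex.ofReal_ne_zero]
  rw [Complex.cpow_neg]
  field_simp

-- decomposition of the exceptional base: `(2π(n+1)/α)^s = α^{-s} (2π(n+1))^s`
private lemma L3 (αn : ℕ) (hαn : 0 < αn) (n : ℕ) (s : ℂ) :
    ((2 * Real.pi * ((n : ℝ) + 1) / αn : ℝ) : ℂ) ^ s
      = ((αn : ℕ) : ℂ) ^ (-s) * ((2 * Real.pi * ((n : ℝ) + 1) : ℝ) : ℂ) ^ s := by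
  have h := Complex.mul_cpow_ofReal_nonneg (a := 2 * Real.pi * ((n : ℝ) + 1))
    (b := ((αn : ℝ))⁻¹) (by positivity) (by positivity) s
  rw [div_eq_mul_inv, Complex.ofReal_mul, h]
  have h2 : ((((αn : ℝ))⁻¹ : ℝ) : ℂ) = ((αn : ℂ))⁻¹ := by push_cast; ring
  have h3 : ((αn : ℂ))⁻¹ ^ s = ((αn : ℂ)) ^ (-s) := by
    rw [Complex.inv_cpow _ _ (by rw [Complex.natCast_arg]; exact Real.pi_ne_zero.symm),
      ← Complex.cpow_neg]
  rw [h2, h3]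
  ring


/-- the computational core of the identification of the contact torsion
function with a dynamical zeta function on a CR Seifert 3-manifold.  With
`x, x_{i,j} ∈ (0,1)`, `α_i x_{i,j} - x ∈ ℤ`, for `Re s < 0`, `s ∉ ℤ`:
`Γ(s) cos(πs/2) [ dχ*(ζ(s,x)+ζ(s,1-x)) + ∑_i ∑_j α_i^{-s}(ζ(s,x_{i,j})+ζ(s,1-x_{i,j})) ]`
equals
`∑_{n≥1} (χ* + ∑_i 1/α_i) d cos(2πnx)(2πn)^s/n
  + ∑_i ∑_{n≥1, α_i ∤ n} (∑_j cos(2πn x_{i,j})) (2πn/α_i)^s / n`,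
with all series converging absolutely. -/
theorem stmt14 (d : ℕ) (hd : 0 < d) (χstar : ℤ) (ι : Type) [Fintype ι]
    (α : ι → ℕ) (hα : ∀ i, 0 < α i)
    (x : ℝ) (hx : x ∈ Set.Ioo (0 : ℝ) 1)
    (X : ι → Fin d → ℝ) (hX : ∀ i j, X i j ∈ Set.Ioo (0 : ℝ) 1)
    (hXint : ∀ i j, ∃ k : ℤ, (α i : ℝ) * X i j - x = (k : ℝ))
    (s : ℂ) (hs : s.re < 0) (hsz : ∀ n : ℤ, s ≠ (n : ℂ)) :
    (Summable fun n : ℕ =>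
      ‖((((χstar : ℝ) + ∑ i, (1 : ℝ) / (α i)) * d *
            Real.cos (2 * Real.pi * (n + 1) * x) : ℝ) : ℂ) *
          (2 * Real.pi * ((n : ℝ) + 1) : ℂ) ^ s / ((n : ℂ) + 1)‖) ∧
    (∀ i : ι, Summable fun n : ℕ =>
      ‖(if α i ∣ (n + 1) then (0 : ℂ) else
          (((∑ j, Real.cos (2 * Real.pi * (n + 1) * X i j)) : ℝ) : ℂ) *
            ((2 * Real.pi * ((n : ℝ) + 1) / (α i) : ℝ) : ℂ) ^ s / ((n : ℂ) + 1))‖) ∧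
    Complex.Gamma s * Complex.cos (Real.pi * s / 2) *
        ((d : ℂ) * (χstar : ℂ) *
            (hurwitzZeta (x : UnitAddCircle) s +
              hurwitzZeta ((1 - x : ℝ) : UnitAddCircle) s) +
          ∑ i, ∑ j, ((α i : ℕ) : ℂ) ^ (-s) *
            (hurwitzZeta ((X i j : ℝ) : UnitAddCircle) s +
              hurwitzZeta ((1 - X i j : ℝ) : UnitAddCircle) s)) =
      (∑' n : ℕ,
          ((((χstar : ℝ) + ∑ i, (1 : ℝ) / (α i)) * d *
              Real.cos (2 * Real.pi * (n + 1) * x) : ℝ) : ℂ) *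
            (2 * Real.pi * ((n : ℝ) + 1) : ℂ) ^ s / ((n : ℂ) + 1)) +
        ∑ i, ∑' n : ℕ,
          (if α i ∣ (n + 1) then (0 : ℂ) else
            (((∑ j, Real.cos (2 * Real.pi * (n + 1) * X i j)) : ℝ) : ℂ) *
              ((2 * Real.pi * ((n : ℝ) + 1) / (α i) : ℝ) : ℂ) ^ s / ((n : ℂ) + 1)) := by

  -- the basic building block
  set T : ℝ → ℂ := fun a => (2 * (Real.pi : ℂ)) ^ s * cosZeta a (1 - s) with hT
  -- the coefficient of the main series
  set c1 : ℂ := ((((χstar : ℝ) + ∑ i, (1 : ℝ) / (α i)) : ℝ) : ℂ) * (d : ℂ) with hc1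
  -- HasSum for the main series
  have hmain : HasSum (fun n : ℕ =>
      ((((χstar : ℝ) + ∑ i, (1 : ℝ) / (α i)) * d *
          Real.cos (2 * Real.pi * (n + 1) * x) : ℝ) : ℂ) *
        (2 * Real.pi * ((n : ℝ) + 1) : ℂ) ^ s / ((n : ℂ) + 1)) (c1 * T x) := by
    refine ((L1 x hs).mul_left c1).congr_fun fun n => ?_
    rw [hc1]
    push_cast
    ring
  -- for each i, HasSum for the full (un-restricted) exceptional series
  have hfull : ∀ i : ι, HasSum (fun n : ℕ =>
      (((∑ j, Real.cos (2 * Real.pi * (n + 1) * X i j)) : ℝ) : ℂ) *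
        ((2 * Real.pi * ((n : ℝ) + 1) / (α i) : ℝ) : ℂ) ^ s / ((n : ℂ) + 1))
      (∑ j, ((α i : ℕ) : ℂ) ^ (-s) * T (X i j)) := by
    intro i
    have hterm : ∀ j : Fin d, HasSum (fun n : ℕ => ((α i : ℕ) : ℂ) ^ (-s) *
        (((Real.cos (2 * Real.pi * ((n : ℝ) + 1) * X i j) : ℝ) : ℂ) *
          ((2 * Real.pi * ((n : ℝ) + 1) : ℝ) : ℂ) ^ s / ((n : ℂ) + 1)))
        (((α i : ℕ) : ℂ) ^ (-s) * T (X i j)) := by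
      intro j
      have hTj : T (X i j) = (2 * (Real.pi : ℂ)) ^ s * cosZeta (X i j) (1 - s) := rfl
      rw [hTj]
      exact (L1 (X i j) hs).mul_left (((α i : ℕ) : ℂ) ^ (-s))
    have h := hasSum_sum (s := (Finset.univ : Finset (Fin d)))
      (fun j _ => hterm j)
    refine h.congr_fun fun n => ?_
    rw [L3 (α i) (hα i) n s]
    push_cast
    rw [Finset.sum_mul, Finset.sum_div]
    exact Finset.sum_congr rfl fun j _ => by ring
  -- for each i, HasSum for the part of the full series with `α i ∣ n + 1`
  have hdiv : ∀ i : ι, HasSum (fun n : ℕ =>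
      if α i ∣ (n + 1) then
        (((∑ j, Real.cos (2 * Real.pi * (n + 1) * X i j)) : ℝ) : ℂ) *
          ((2 * Real.pi * ((n : ℝ) + 1) / (α i) : ℝ) : ℂ) ^ s / ((n : ℂ) + 1)
      else 0) (((d : ℂ) / (α i : ℂ)) * T x) := by
    intro i
    set f : ℕ → ℂ := fun n =>
      if α i ∣ (n + 1) then
        (((∑ j, Real.cos (2 * Real.pi * (n + 1) * X i j)) : ℝ) : ℂ) *
          ((2 * Real.pi * ((n : ℝ) + 1) / (α i) : ℝ) : ℂ) ^ s / ((n : ℂ) + 1)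
      else 0 with hf
    set e : ℕ → ℕ := fun m => α i * m + (α i - 1) with he
    have hinj : Function.Injective e := by
      intro a b hab
      simp only [he] at hab
      have h1 : α i * a = α i * b := by omega
      exact Nat.eq_of_mul_eq_mul_left (hα i) h1
    have hrange : ∀ n ∉ Set.range e, f n = 0 := by
      intro n hn
      rw [hf]
      simp only []
      rw [if_neg]
      rintro ⟨t, ht⟩
      rcases t with _ | t'
      · simp at ht
      · refine hn ⟨t', ?_⟩
        simp only [he]
        rw [Nat.mul_succ] at ht
        have := hα i
        omega
    rw [← hinj.hasSum_iff hrange]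
    have hem : ∀ m : ℕ, e m + 1 = α i * (m + 1) := by
      intro m
      simp only [he, Nat.mul_succ]
      have := hα i
      omega
    refine ((L1 x hs).mul_left ((d : ℂ) / (α i : ℂ))).congr_fun fun m => ?_
    have hemr : ((e m : ℝ) + 1) = (α i : ℝ) * ((m : ℝ) + 1) := by
      have h := congrArg (fun t : ℕ => (t : ℝ)) (hem m)
      push_cast at h
      linarith
    have hdvd : α i ∣ (e m + 1) := ⟨m + 1, hem m⟩
    have hcos : ∀ j, Real.cos (2 * Real.pi * ((e m : ℝ) + 1) * X i j)
        = Real.cos (2 * Real.pi * ((m : ℝ) + 1) * x) := by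
      intro j
      obtain ⟨k, hk⟩ := hXint i j
      have harg : 2 * Real.pi * ((e m : ℝ) + 1) * X i j
          = 2 * Real.pi * ((m : ℝ) + 1) * x + ((k * (m + 1) : ℤ) : ℝ) * (2 * Real.pi) := by
        rw [hemr]
        push_cast
        linear_combination (2 * Real.pi * ((m : ℝ) + 1)) * hk
      rw [harg, Real.cos_add_int_mul_two_pi]
    have hbase : (2 * Real.pi * ((e m : ℝ) + 1) / (α i) : ℝ)
        = 2 * Real.pi * ((m : ℝ) + 1) := by
      rw [hemr]
      have : (α i : ℝ) ≠ 0 := Nat.cast_ne_zero.mpr (hα i).ne'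
      field_simp
    show f (e m) = _
    rw [hf]
    simp only []
    rw [if_pos hdvd]
    have hsum : (∑ j, Real.cos (2 * Real.pi * ((e m : ℝ) + 1) * X i j))
        = (d : ℝ) * Real.cos (2 * Real.pi * ((m : ℝ) + 1) * x) := by
      simp only [hcos]
      simp [Finset.sum_const, nsmul_eq_mul]
    have hcastem : ((e m : ℂ) + 1) = (α i : ℂ) * ((m : ℂ) + 1) := by
      have h := congrArg (fun t : ℕ => (t : ℂ)) (hem m)
      push_cast at h
      linear_combination h
    rw [hsum, hbase, hcastem]
    have hα0 : (α i : ℂ) ≠ 0 := Nat.cast_ne_zero.mpr (hα i).ne'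
    have hm0 : ((m : ℂ) + 1) ≠ 0 := Nat.cast_add_one_ne_zero m
    push_cast
    field_simp
  -- combine: the restricted exceptional series
  have hexc : ∀ i : ι, HasSum (fun n : ℕ =>
      if α i ∣ (n + 1) then (0 : ℂ) else
        (((∑ j, Real.cos (2 * Real.pi * (n + 1) * X i j)) : ℝ) : ℂ) *
          ((2 * Real.pi * ((n : ℝ) + 1) / (α i) : ℝ) : ℂ) ^ s / ((n : ℂ) + 1))
      ((∑ j, ((α i : ℕ) : ℂ) ^ (-s) * T (X i j)) - ((d : ℂ) / (α i : ℂ)) * T x) := by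
    intro i
    refine ((hfull i).sub (hdiv i)).congr_fun fun n => ?_
    by_cases h : α i ∣ (n + 1) <;> simp [h]
  refine ⟨?_, fun i => ?_, ?_⟩
  · exact (summable_norm_iff.mpr hmain.summable)
  · exact (summable_norm_iff.mpr (hexc i).summable)
  · rw [hmain.tsum_eq]
    have : ∀ i : ι, (∑' n : ℕ,
        (if α i ∣ (n + 1) then (0 : ℂ) else
          (((∑ j, Real.cos (2 * Real.pi * (n + 1) * X i j)) : ℝ) : ℂ) *
            ((2 * Real.pi * ((n : ℝ) + 1) / (α i) : ℝ) : ℂ) ^ s / ((n : ℂ) + 1)))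
        = (∑ j, ((α i : ℕ) : ℂ) ^ (-s) * T (X i j)) - ((d : ℂ) / (α i : ℂ)) * T x :=
      fun i => (hexc i).tsum_eq
    simp only [this]
    -- rewrite the LHS using the functional equation L2
    rw [mul_add, Finset.mul_sum]
    have hL2x := L2 x hsz
    have hLHS1 : Complex.Gamma s * Complex.cos (Real.pi * s / 2) *
        ((d : ℂ) * (χstar : ℂ) *
          (hurwitzZeta (x : UnitAddCircle) s + hurwitzZeta ((1 - x : ℝ) : UnitAddCircle) s))
        = (d : ℂ) * (χstar : ℂ) * T x := by
      have hTx : T x = (2 * (Real.pi : ℂ)) ^ s * cosZeta x (1 - s) := rfl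
      rw [hTx, ← hL2x]; ring
    have hLHS2 : ∀ i : ι, Complex.Gamma s * Complex.cos (Real.pi * s / 2) *
        (∑ j, ((α i : ℕ) : ℂ) ^ (-s) *
          (hurwitzZeta ((X i j : ℝ) : UnitAddCircle) s +
            hurwitzZeta ((1 - X i j : ℝ) : UnitAddCircle) s))
        = ∑ j, ((α i : ℕ) : ℂ) ^ (-s) * T (X i j) := by
      intro i
      rw [Finset.mul_sum]
      refine Finset.sum_congr rfl fun j _ => ?_
      have hTj : T (X i j) = (2 * (Real.pi : ℂ)) ^ s * cosZeta (X i j) (1 - s) := rfl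
      rw [hTj, ← L2 (X i j) hsz]; ring
    rw [hLHS1]
    rw [Finset.sum_congr rfl fun i _ => hLHS2 i]
    rw [Finset.sum_sub_distrib]
    have hsumdiv : (∑ i : ι, ((d : ℂ) / (α i : ℂ)) * T x)
        = (d : ℂ) * (∑ i : ι, 1 / ((α i : ℕ) : ℂ)) * T x := by
      rw [Finset.mul_sum, Finset.sum_mul]
      exact Finset.sum_congr rfl fun i _ => by ring
    rw [hsumdiv, hc1]
    have hcast2 : ((((χstar : ℝ) + ∑ i, (1 : ℝ) / (α i)) : ℝ) : ℂ)
        = (χstar : ℂ) + ∑ i : ι, 1 / ((α i : ℕ) : ℂ) := by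
      push_cast
      ring
    rw [hcast2]
    ring
end
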